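/- Let p be an odd prime. The ideal I of R generated by all products u·m, where m is a ρ-invariant monomial and u is a variable dividing m, equals the ideal I' of R generated by all products u·m, where m is a ρ-invariant monomial of degree at most p and u is a variable dividing m. -/

import Mathlib

open MvPolynomial

noncomputable section

abbrev DVar (r s : ℕ) := (Fin r ⊕ Fin r) ⊕ (Fin s ⊕ Fin s)

def dswap {r s : ℕ} : DVar r s → DVar r s
  | .inl (.inl i) => .inl (.inr i)
  | .inl (.inr i) => .inl (.inl i)
  | .inr (.inl j) => .inr (.inr j)
  | .inr (.inr j) => .inr (.inl j)

def sigmaMap (F : Type*) [Field F] (r s : ℕ) :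
    MvPolynomial (DVar r s) F →ₐ[F] MvPolynomial (DVar r s) F :=
  MvPolynomial.rename dswap

def rhoCoeff {F : Type*} [Field F] {r s : ℕ} (lam : Fin r → F) : DVar r s → F
  | .inl (.inl i) => lam i
  | .inl (.inr i) => (lam i)⁻¹
  | .inr _ => 1

def rhoMap (F : Type*) [Field F] (r s : ℕ) (lam : Fin r → F) :
    MvPolynomial (DVar r s) F →ₐ[F] MvPolynomial (DVar r s) F :=
  MvPolynomial.aeval fun v => MvPolynomial.C (rhoCoeff lam v) * MvPolynomial.X v

def HilbertIdeal (F : Type*) [Field F] (r s : ℕ) (lam : Fin r → F) :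
    Ideal (MvPolynomial (DVar r s) F) :=
  Ideal.span {f | sigmaMap F r s f = f ∧ rhoMap F r s lam f = f ∧ constantCoeff f = 0}

def IsMonomial {σ F : Type*} [CommSemiring F] (f : MvPolynomial σ F) : Prop :=
  ∃ d : σ →₀ ℕ, f = monomial d 1

def GSet (F : Type*) [Field F] (r s p : ℕ) (lam : Fin r → F) :
    Set (MvPolynomial (DVar r s) F) :=
  {f | ∃ m, IsMonomial m ∧ rhoMap F r s lam m = m ∧ sigmaMap F r s m ≠ m ∧
      m.totalDegree ≤ p ∧ f = m + sigmaMap F r s m} ∪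
  {f | ∃ (m : MvPolynomial (DVar r s) F) (v : DVar r s), IsMonomial m ∧ rhoMap F r s lam m = m ∧ m.totalDegree ≤ p ∧
      X v ∣ m ∧ f = X v * m} ∪
  {f | (∃ i : Fin r, f = X (Sum.inl (Sum.inl i)) * X (Sum.inl (Sum.inr i))) ∨
       (∃ j : Fin s, f = X (Sum.inr (Sum.inl j)) * X (Sum.inr (Sum.inr j)))}

def lmExp {σ F : Type*} [CommSemiring F] (mo : MonomialOrder σ) (f : MvPolynomial σ F) :
    σ →₀ ℕ :=
  mo.toSyn.symm (f.support.sup fun d => mo.toSyn d)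


section AuxiliaryLemmas

lemma dihedral_seg_sum {V : Type*} {p : ℕ} (c : V → ZMod p) (L : List V) (i j : ℕ) (hij : i ≤ j) :
    ((((L.drop i).take (j - i)).map c).sum : ZMod p)
      = ((L.take j).map c).sum - ((L.take i).map c).sum := by
  have h : L.take j = L.take i ++ (L.drop i).take (j - i) := by
    rw [← List.take_add]; congr 1; omega
  rw [h, List.map_append, List.sum_append]; ring

lemma dihedral_pigeonhole {V : Type*} {p : ℕ} [NeZero p] (c : V → ZMod p) :
    ∀ (n : ℕ) (M : Multiset V) (u : V), Multiset.card M ≤ n → u ∈ M →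
      (M.map c).sum = 0 →
      ∃ N, N ≤ M ∧ u ∈ N ∧ Multiset.card N ≤ p ∧ (N.map c).sum = 0 := by
  intro n
  induction n with
  | zero =>
    intro M u hcard hu _
    have : 0 < Multiset.card M := Multiset.card_pos.mpr (by rintro rfl; simp at hu)
    omega
  | succ n ih =>
    intro M u hcard hu hsum
    by_cases hle : Multiset.card M ≤ p
    · exact ⟨M, le_rfl, hu, hle, hsum⟩
    push_neg at hle
    obtain ⟨M', rfl⟩ := Multiset.exists_cons_of_mem hu
    obtain ⟨l', rfl⟩ := Quot.exists_rep M'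
    set L : List V := u :: l' with hL
    have hML : (u ::ₘ (Quot.mk _ l' : Multiset V)) = (L : Multiset V) := rfl
    have hlen : p + 1 ≤ L.length := by
      have := hle
      rw [hML] at this
      simpa using this
    set f : Fin (p+1) → ZMod p := fun i => ((L.take i).map c).sum with hf
    have hcards : Fintype.card (ZMod p) < Fintype.card (Fin (p+1)) := by
      simp [ZMod.card]
    obtain ⟨a, b, hab, hfab⟩ := Fintype.exists_ne_map_eq_of_card_lt f hcards
    have key : ∀ i j : Fin (p+1), (i : ℕ) < j → f i = f j →
        ∃ N, N ≤ (u ::ₘ (Quot.mk _ l' : Multiset V)) ∧ u ∈ N ∧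
          Multiset.card N ≤ p ∧ (N.map c).sum = 0 := by
      intro i j hij hfeq
      rw [hML]
      set seg : List V := (L.drop i).take (j - i) with hseg
      have hsegsum : ((seg.map c).sum : ZMod p) = 0 := by
        rw [hseg, dihedral_seg_sum c L i j (le_of_lt hij)]
        exact sub_eq_zero_of_eq hfeq.symm
      have hseglen : seg.length = (j : ℕ) - i := by
        rw [hseg, List.length_take, List.length_drop]
        have : (j : ℕ) ≤ p := Nat.lt_succ_iff.mp j.isLt
        omega
      have hdecomp : (L : Multiset V) =
          ((L.take i : List V) : Multiset V) + (seg : Multiset V)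
            + ((L.drop j : List V) : Multiset V) := by
        have h1 : L = (L.take i ++ seg) ++ L.drop j := by
          rw [hseg]
          rw [← List.take_add]
          have : (i : ℕ) + ((j : ℕ) - i) = j := by omega
          rw [this, List.take_append_drop]
        conv_lhs => rw [h1]
        simp
      rcases Nat.eq_zero_or_pos i with hi0 | hipos
      · refine ⟨((L.take j : List V) : Multiset V), ?_, ?_, ?_, ?_⟩
        · have h1 : L = L.take j ++ L.drop j := (List.take_append_drop _ _).symm
          conv_rhs => rw [h1]
          rw [← Multiset.coe_add]
          exact Multiset.le_add_right _ _
        · have hj1 : 1 ≤ (j : ℕ) := by omega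
          obtain ⟨j', hj'⟩ := Nat.exists_eq_add_of_le hj1
          rw [hL]
          have : (u :: l').take (j : ℕ) = u :: (l'.take ((j:ℕ) - 1)) := by
            rw [hj', Nat.one_add, List.take_succ_cons]
            simp [hj']
          rw [this]
          simp
        · rw [Multiset.coe_card, List.length_take]
          have : (j : ℕ) ≤ p := Nat.lt_succ_iff.mp j.isLt
          omega
        · have h0 : f i = 0 := by simp only [hf, hi0]; simp
          rw [Multiset.map_coe, Multiset.sum_coe]
          exact hfeq.symm.trans h0
      · set N' : Multiset V := ((L.take i : List V) : Multiset V)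
            + ((L.drop j : List V) : Multiset V) with hN'
        have hMN' : (L : Multiset V) = N' + (seg : Multiset V) := by
          rw [hdecomp, hN']
          exact add_right_comm _ _ _
        have hcardN' : Multiset.card N' ≤ n := by
          have hc1 : Multiset.card (L : Multiset V) ≤ n + 1 := by rw [← hML]; exact hcard
          have hc2 : Multiset.card (L : Multiset V)
              = Multiset.card N' + Multiset.card (seg : Multiset V) := by
            rw [hMN', Multiset.card_add]
          have hc3 : Multiset.card (seg : Multiset V) ≥ 1 := by
            rw [Multiset.coe_card, hseglen]; omega
          omega
        have huN' : u ∈ N' := by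
          rw [hN']
          have : u ∈ (L.take i : List V) := by
            obtain ⟨i', hi'⟩ := Nat.exists_eq_add_of_le hipos
            rw [hL]
            have : (u :: l').take (i : ℕ) = u :: (l'.take ((i:ℕ) - 1)) := by
              rw [hi', Nat.one_add, List.take_succ_cons]
              simp [hi']
            rw [this]; simp
          exact Multiset.mem_add.mpr (Or.inl this)
        have hsumN' : (N'.map c).sum = 0 := by
          have h2 : ((L : Multiset V).map c).sum = 0 := by rw [← hML]; exact hsum
          rw [hMN', Multiset.map_add, Multiset.sum_add] at h2
          have hsg : (((seg : Multiset V)).map c).sum = 0 := by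
            rw [Multiset.map_coe, Multiset.sum_coe]; exact hsegsum
          rw [hsg, add_zero] at h2
          exact h2
        obtain ⟨N, hN1, hN2, hN3, hN4⟩ := ih N' u hcardN' huN' hsumN'
        exact ⟨N, le_trans hN1 (hMN' ▸ Multiset.le_add_right _ _), hN2, hN3, hN4⟩
    rcases hab.lt_or_gt with h | h
    · exact key a b h hfab
    · exact key b a h hfab.symm

lemma dihedral_rho_monomial {F : Type*} [Field F] {r s : ℕ} (lam : Fin r → F)
    (d : DVar r s →₀ ℕ) :
    rhoMap F r s lam (monomial d 1) =
      C (d.prod fun v n => rhoCoeff lam v ^ n) * monomial d 1 := by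
  classical
  rw [rhoMap, aeval_monomial, map_one, one_mul, monomial_eq, C_1, one_mul]
  unfold Finsupp.prod
  rw [map_prod, ← Finset.prod_mul_distrib]
  exact Finset.prod_congr rfl fun v _ => by dsimp only; rw [mul_pow, C_pow]

lemma dihedral_rho_monomial_invariant_iff {F : Type*} [Field F] {r s : ℕ} (lam : Fin r → F)
    (d : DVar r s →₀ ℕ) :
    rhoMap F r s lam (monomial d 1) = monomial d 1 ↔
      (d.prod fun v n => rhoCoeff lam v ^ n) = 1 := by
  rw [dihedral_rho_monomial]
  constructor
  · intro h
    have h2 := congrArg (coeff d) h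
    rw [coeff_C_mul, coeff_monomial, if_pos rfl, mul_one] at h2
    exact h2
  · intro h; rw [h, C_1, one_mul]

end AuxiliaryLemmas

/-- For `p` an odd prime, the ideal generated by all products `u·m` with `m` a
`ρ`-invariant monomial and `u` a variable dividing `m` equals the ideal generated by those
products with `deg m ≤ p`. -/
theorem ideal_var_mul_monomial_eq_bounded_degree
    {F : Type*} [Field F] [CharP F 2] {r s p : ℕ} (hp : p.Prime) (hodd : Odd p)
    (ζ : F) (hζ : IsPrimitiveRoot ζ p)
    (lam : Fin r → F) (hlam : ∀ i, lam i ^ p = 1 ∧ lam i ≠ 1) :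
    Ideal.span {f : MvPolynomial (DVar r s) F |
        ∃ (m : MvPolynomial (DVar r s) F) (u : DVar r s),
          IsMonomial m ∧ rhoMap F r s lam m = m ∧ X u ∣ m ∧ f = X u * m} =
    Ideal.span {f : MvPolynomial (DVar r s) F |
        ∃ (m : MvPolynomial (DVar r s) F) (u : DVar r s),
          IsMonomial m ∧ rhoMap F r s lam m = m ∧ m.totalDegree ≤ p ∧ X u ∣ m ∧ f = X u * m} := by
  classical
  haveI : NeZero p := ⟨hp.ne_zero⟩
  have hex : ∀ i : Fin r, ∃ t, t < p ∧ ζ ^ t = lam i := fun i => by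
    obtain ⟨t, ht, ht2⟩ := hζ.eq_pow_of_pow_eq_one (hlam i).1
    exact ⟨t, ht, ht2⟩
  choose k hk1 hk2 using hex
  set c : DVar r s → ZMod p := fun v =>
    match v with
    | .inl (.inl i) => (k i : ZMod p)
    | .inl (.inr i) => -(k i : ZMod p)
    | .inr _ => 0
    with hc
  have hcoeff : ∀ v : DVar r s, rhoCoeff lam v = ζ ^ (c v).val := by
    rintro ((i | i) | j)
    · show lam i = ζ ^ ((k i : ZMod p)).val
      rw [ZMod.val_natCast_of_lt (hk1 i), hk2 i]
    · show (lam i)⁻¹ = ζ ^ ((-(k i : ZMod p))).val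
      apply inv_eq_of_mul_eq_one_right
      rw [← hk2 i, ← pow_add, hζ.pow_eq_one_iff_dvd,
        ← ZMod.natCast_eq_zero_iff]
      push_cast
      rw [ZMod.natCast_val, ZMod.cast_id]
      ring
    · show (1 : F) = ζ ^ ((0 : ZMod p)).val
      rw [ZMod.val_zero, pow_zero]
  have hpi : ∀ d : DVar r s →₀ ℕ,
      (d.prod fun v n => rhoCoeff lam v ^ n) = ζ ^ (d.sum fun v n => n * (c v).val) := by
    intro d
    rw [Finsupp.prod, Finsupp.sum, ← Finset.prod_pow_eq_pow_sum]
    exact Finset.prod_congr rfl fun v _ => by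
      rw [hcoeff v, ← pow_mul, Nat.mul_comm]
  have hw : ∀ d : DVar r s →₀ ℕ,
      rhoMap F r s lam (monomial d 1) = monomial d 1 ↔
        (d.sum fun v n => (n : ZMod p) * c v) = 0 := by
    intro d
    rw [dihedral_rho_monomial_invariant_iff, hpi, hζ.pow_eq_one_iff_dvd,
      ← ZMod.natCast_eq_zero_iff]
    have hcast : ((d.sum fun v n => n * (c v).val : ℕ) : ZMod p)
        = d.sum fun v n => (n : ZMod p) * c v := by
      rw [Finsupp.sum, Finsupp.sum, Nat.cast_sum]
      exact Finset.sum_congr rfl fun v _ => by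
        push_cast
        rw [ZMod.natCast_val, ZMod.cast_id]
    rw [hcast]
  have hbridge : ∀ d : DVar r s →₀ ℕ,
      ((Finsupp.toMultiset d).map c).sum = d.sum fun v n => (n : ZMod p) * c v := by
    intro d
    induction d using Finsupp.induction with
    | zero => simp
    | single_add a n f haf hn ih =>
      rw [Finsupp.toMultiset_add, Multiset.map_add, Multiset.sum_add, ih,
        Finsupp.toMultiset_single,
        Finsupp.sum_add_index' (fun v => by simp) (fun v b₁ b₂ => by push_cast; ring),
        Finsupp.sum_single_index (by simp)]
      congr 1
      simp [Multiset.nsmul_singleton, Multiset.map_replicate, Multiset.sum_replicate,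
        nsmul_eq_mul]
  apply le_antisymm
  · rw [Ideal.span_le]
    rintro f ⟨m, u, ⟨d, rfl⟩, hinv, hdvd, rfl⟩
    have hdu : d u ≠ 0 := by
      rcases X_dvd_monomial.mp hdvd with h | h
      · exact absurd h one_ne_zero
      · exact h
    obtain ⟨N, hNle, huN, hNcard, hNsum⟩ :=
      dihedral_pigeonhole c (Multiset.card d.toMultiset) d.toMultiset u le_rfl
        ((Finsupp.mem_toMultiset _ _).mpr (Finsupp.mem_support_iff.mpr hdu))
        (by rw [hbridge]; exact (hw d).mp hinv)
    set e : DVar r s →₀ ℕ := N.toFinsupp with he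
    have heN : Finsupp.toMultiset e = N := Multiset.toFinsupp_toMultiset N
    have hele : e ≤ d := by
      rw [Finsupp.le_def]
      intro v
      rw [he, Multiset.toFinsupp_apply, ← Finsupp.count_toMultiset d v]
      exact Multiset.le_iff_count.mp hNle v
    have heu : e u ≠ 0 := by
      rw [he, Multiset.toFinsupp_apply]
      exact (Multiset.count_pos.mpr huN).ne'
    have hedeg : (monomial e (1:F)).totalDegree ≤ p := by
      rw [totalDegree_monomial _ one_ne_zero]
      have hcN : Multiset.card N = e.sum fun _ n => n := by
        rw [← heN, Finsupp.card_toMultiset]; rfl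
      omega
    have heinv : rhoMap F r s lam (monomial e 1) = monomial e 1 :=
      (hw e).mpr (by rw [← hbridge, heN]; exact hNsum)
    have hdecomp : (X u : MvPolynomial (DVar r s) F) * monomial d 1
        = monomial (d - e) 1 * (X u * monomial e 1) := by
      rw [mul_left_comm, monomial_mul, one_mul, tsub_add_cancel_of_le hele]
    rw [hdecomp]
    exact Ideal.mul_mem_left _ _ (Ideal.subset_span
      ⟨monomial e 1, u, ⟨e, rfl⟩, heinv, hedeg, X_dvd_monomial.mpr (Or.inr heu), rfl⟩)
  · apply Ideal.span_mono
    rintro f ⟨m, u, h1, h2, _, h4, h5⟩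
    exact ⟨m, u, h1, h2, h4, h5⟩
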